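/- Let p be a prime and n ≥ 1. For any integers a, b with p^{n−1} ≤ a, b < p^n, the number of common descendants |Desc(a) ∩ Desc(b)| is either 0 or a power of 2; more precisely it equals 0 or 2^m for some 0 ≤ m ≤ n − 1. -/
import Mathlib


/-- For `p^m ≤ a < p^(m+1)` with base-`p` expansion `a = Σ_{i=0}^m a_i p^i` (so `a_m ≠ 0`),
the set of descendants of `a` is
`Desc(a) = { a_m p^m + Σ_{i=0}^{m-1} ε_i a_i p^i : ε_i ∈ {1, -1} } ⊆ ℤ`. -/
def Desc (p m a : ℕ) : Set ℤ :=
  {d | ∃ ε : ℕ → ℤ, (∀ i, ε i = 1 ∨ ε i = -1) ∧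
    d = ((a / p ^ m : ℕ) : ℤ) * (p : ℤ) ^ m +
      ∑ i ∈ Finset.range m, ε i * (((a / p ^ i % p : ℕ) : ℤ) * (p : ℤ) ^ i)}

/-- `X_{ab}` is the number of common descendants of `a` and `b`. -/
noncomputable def Xcard (p m a b : ℕ) : ℕ := (Desc p m a ∩ Desc p m b).ncard

/-- `Y_{ab}` is the number of descendants `d` of `a` such that `d - 1` is a descendant of `b`. -/
noncomputable def Ycard (p m a b : ℕ) : ℕ := {d ∈ Desc p m a | d - 1 ∈ Desc p m b}.ncard



/-- the shift map `e ↦ c + p e`. -/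
def gp (p : ℕ) (c : ℤ) : ℤ → ℤ := fun e => c + (p : ℤ) * e

/-- Finset version of `Desc`, by stripping the lowest digit. -/
def Dfin (p : ℕ) : ℕ → ℕ → Finset ℤ
  | 0, a => {(a : ℤ)}
  | m+1, a => (Dfin p m (a / p)).image (gp p ((a % p : ℕ) : ℤ)) ∪
      (Dfin p m (a / p)).image (gp p (-((a % p : ℕ) : ℤ)))

lemma descAux_succ {p : ℕ} (m a : ℕ) (ε : ℕ → ℤ) :
    ((a / p ^ (m+1) : ℕ) : ℤ) * (p:ℤ) ^ (m+1) +
      ∑ i ∈ Finset.range (m+1), ε i * (((a / p ^ i % p : ℕ) : ℤ) * (p:ℤ) ^ i)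
    = ε 0 * ((a % p : ℕ) : ℤ) +
      (p:ℤ) * (((a / p / p ^ m : ℕ) : ℤ) * (p:ℤ) ^ m +
        ∑ i ∈ Finset.range m, ε (i+1) * (((a / p / p ^ i % p : ℕ) : ℤ) * (p:ℤ) ^ i)) := by
  have hdiv : ∀ i : ℕ, a / p ^ (i+1) = a / p / p ^ i := by
    intro i
    rw [Nat.div_div_eq_div_mul, ← pow_succ']
  rw [Finset.sum_range_succ']
  simp only [hdiv]
  have hterm : ∀ i ∈ Finset.range m,
      ε (i+1) * (((a / p / p ^ i % p : ℕ) : ℤ) * (p:ℤ) ^ (i+1))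
        = (p:ℤ) * (ε (i+1) * (((a / p / p ^ i % p : ℕ) : ℤ) * (p:ℤ) ^ i)) := by
    intro i _
    rw [pow_succ]
    ring
  rw [Finset.sum_congr rfl hterm, ← Finset.mul_sum]
  simp only [pow_zero, Nat.pow_zero, Nat.div_one, pow_succ]
  ring

lemma Desc_succ {p : ℕ} (m a : ℕ) :
    Desc p (m+1) a = {d : ℤ | ∃ ε : ℤ, (ε = 1 ∨ ε = -1) ∧
      ∃ e ∈ Desc p m (a / p), d = ε * ((a % p : ℕ) : ℤ) + (p:ℤ) * e} := by
  ext d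
  constructor
  · rintro ⟨ε, hε, rfl⟩
    exact ⟨ε 0, hε 0, _, ⟨fun i => ε (i+1), fun i => hε (i+1), rfl⟩, descAux_succ m a ε⟩
  · rintro ⟨ε0, hε0, e, ⟨ε, hε, rfl⟩, rfl⟩
    refine ⟨fun i => if i = 0 then ε0 else ε (i-1),
      fun i => by dsimp only; split <;> [exact hε0; exact hε _], ?_⟩
    rw [descAux_succ m a _]
    simp

lemma coe_Dfin {p : ℕ} : ∀ m a, (Dfin p m a : Set ℤ) = Desc p m a
  | 0, a => by
    ext d
    simp only [Dfin, Finset.coe_singleton, Set.mem_singleton_iff, Desc, Set.mem_setOf_eq,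
      pow_zero, Nat.pow_zero, Nat.div_one, Finset.range_zero, Finset.sum_empty, mul_one, add_zero]
    constructor
    · rintro rfl; exact ⟨fun _ => 1, fun _ => Or.inl rfl, rfl⟩
    · rintro ⟨ε, _, rfl⟩; rfl
  | m+1, a => by
    rw [Desc_succ]
    ext d
    simp only [Dfin, Finset.coe_union, Set.mem_union, Finset.coe_image, Set.mem_image,
      ← coe_Dfin m (a / p), Finset.mem_coe, gp, Set.mem_setOf_eq]
    constructor
    · rintro (⟨e, he, rfl⟩ | ⟨e, he, rfl⟩)
      · exact ⟨1, Or.inl rfl, e, by simpa using he, by ring⟩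
      · exact ⟨-1, Or.inr rfl, e, by simpa using he, by ring⟩
    · rintro ⟨ε, (rfl | rfl), e, he, rfl⟩
      · exact Or.inl ⟨e, by simpa using he, by ring⟩
      · exact Or.inr ⟨e, by simpa using he, by ring⟩

def XF (p m a b : ℕ) : ℕ := ((Dfin p m a) ∩ (Dfin p m b)).card

def YF (p m a b : ℕ) : ℕ := ((Dfin p m a).filter (fun x => x - 1 ∈ Dfin p m b)).card

lemma Xcard_eq_XF {p m a b : ℕ} : Xcard p m a b = XF p m a b := by
  unfold Xcard XF
  rw [← Set.ncard_coe_finset]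
  congr 1
  rw [Finset.coe_inter, coe_Dfin, coe_Dfin]

lemma XF_comm {p m a b : ℕ} : XF p m a b = XF p m b a := by
  unfold XF; rw [Finset.inter_comm]


lemma gp_inj {p : ℕ} (hp : (p:ℤ) ≠ 0) (c : ℤ) : Function.Injective (gp p c) := by
  intro x y h
  exact mul_left_cancel₀ hp (add_left_cancel h)

lemma image_inter_gp {p : ℕ} (hp : (p:ℤ) ≠ 0) (A B : Finset ℤ) {c d k : ℤ}
    (hk : c = d + (p:ℤ) * k) :
    (A.image (gp p c)) ∩ (B.image (gp p d)) =
      (A.filter (fun e => e + k ∈ B)).image (gp p c) := by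
  ext x
  simp only [Finset.mem_inter, Finset.mem_image, Finset.mem_filter, gp]
  constructor
  · rintro ⟨⟨e, he, rfl⟩, ⟨f, hf, hef⟩⟩
    have h1 : (p:ℤ) * f = (p:ℤ) * (e + k) := by rw [hk] at hef; rw [mul_add]; linarith
    have : f = e + k := mul_left_cancel₀ hp h1
    exact ⟨e, ⟨he, this ▸ hf⟩, rfl⟩
  · rintro ⟨e, ⟨he, hek⟩, rfl⟩
    exact ⟨⟨e, he, rfl⟩, ⟨e + k, hek, by rw [hk]; ring⟩⟩

lemma disj_image_gp {p : ℕ} (A B : Finset ℤ) {c d : ℤ} (h : ¬ (p:ℤ) ∣ (c - d)) :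
    Disjoint (A.image (gp p c)) (B.image (gp p d)) := by
  rw [Finset.disjoint_left]
  rintro x hx hx'
  simp only [Finset.mem_image, gp] at hx hx'
  obtain ⟨e, _, rfl⟩ := hx
  obtain ⟨f, _, hef⟩ := hx'
  exact h ⟨f - e, by linarith [mul_sub (p:ℤ) f e]⟩

lemma inter_empty_gp {p : ℕ} (A B : Finset ℤ) {c d : ℤ} (h : ¬ (p:ℤ) ∣ (c - d)) :
    (A.image (gp p c)) ∩ (B.image (gp p d)) = ∅ :=
  Finset.disjoint_iff_inter_eq_empty.mp (disj_image_gp A B h)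

lemma not_dvd_helper {p : ℕ} {x : ℤ} (h0 : x ≠ 0) (hpos : x ≠ (p:ℤ)) (hneg : x ≠ -(p:ℤ))
    (hb : x < 2*(p:ℤ)) (hb' : -(2*(p:ℤ)) < x) : ¬ (p:ℤ) ∣ x := by
  have hp0 : (0:ℤ) ≤ (p:ℤ) := Int.natCast_nonneg p
  rintro ⟨c, rfl⟩
  rcases show c ≤ -2 ∨ c = -1 ∨ c = 0 ∨ c = 1 ∨ 2 ≤ c by omega with h | h | h | h | h
  · nlinarith
  · exact hneg (by subst h; ring)
  · exact h0 (by subst h; ring)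
  · exact hpos (by subst h; ring)
  · nlinarith

lemma card_filter_zero (A B : Finset ℤ) :
    (A.filter (fun e => e + (0:ℤ) ∈ B)).card = (A ∩ B).card := by
  congr 1
  simp only [add_zero]
  exact Finset.filter_mem_eq_inter

lemma card_filter_neg_one {p m a b : ℕ} :
    ((Dfin p m a).filter (fun e => e + (-1:ℤ) ∈ Dfin p m b)).card = YF p m a b := by
  unfold YF
  congr 1

lemma card_filter_one {p m a b : ℕ} :
    ((Dfin p m a).filter (fun e => e + (1:ℤ) ∈ Dfin p m b)).card = YF p m b a := by
  unfold YF
  apply Finset.card_bij (fun e _ => e + 1)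
  · intro e he
    simp only [Finset.mem_filter] at he ⊢
    exact ⟨he.2, by simpa using he.1⟩
  · intro e he f hf h
    omega
  · intro f hf
    simp only [Finset.mem_filter] at hf
    exact ⟨f - 1, by simp only [Finset.mem_filter]; exact ⟨hf.2, by simpa using hf.1⟩, by ring⟩

lemma Dfin_parity : ∀ (m a : ℕ), ∀ x ∈ Dfin 2 m a, (2:ℤ) ∣ x - a
  | 0, a => by intro x hx; simp only [Dfin, Finset.mem_singleton] at hx; simp [hx]
  | m+1, a => by
    intro x hx
    have ha : (a:ℤ) = 2 * ((a/2 : ℕ) : ℤ) + ((a % 2 : ℕ) : ℤ) := by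
      push_cast [Nat.div_add_mod]
      omega
    simp only [Dfin, Finset.mem_union, Finset.mem_image, gp] at hx
    rcases hx with ⟨e, _, rfl⟩ | ⟨e, _, rfl⟩ <;> · rw [ha]; push_cast; omega

lemma filter_shift (S T : Finset ℤ) :
    S.filter (fun x => x - 1 ∈ T) = S ∩ T.image (fun t => t + 1) := by
  ext x
  simp only [Finset.mem_filter, Finset.mem_inter, Finset.mem_image]
  constructor
  · rintro ⟨hx, ht⟩; exact ⟨hx, x - 1, ht, by ring⟩
  · rintro ⟨hx, t, ht, rfl⟩; simpa using ⟨hx, ht⟩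

lemma image_gp_succ {p : ℕ} (B : Finset ℤ) (d : ℤ) :
    (B.image (gp p d)).image (fun t => t + 1) = B.image (gp p (d+1)) := by
  rw [Finset.image_image]
  congr 1
  funext e
  simp [gp]; ring

lemma YF_succ_eq {p m a b : ℕ} :
    YF p (m+1) a b =
      (((Dfin p m (a/p)).image (gp p ((a % p : ℕ) : ℤ)) ∪
        (Dfin p m (a/p)).image (gp p (-((a % p : ℕ) : ℤ)))) ∩
       ((Dfin p m (b/p)).image (gp p (((b % p : ℕ) : ℤ) + 1)) ∪
        (Dfin p m (b/p)).image (gp p (-((b % p : ℕ) : ℤ) + 1)))).card := by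
  unfold YF
  rw [show Dfin p (m+1) a = (Dfin p m (a/p)).image (gp p ((a % p : ℕ) : ℤ)) ∪
        (Dfin p m (a/p)).image (gp p (-((a % p : ℕ) : ℤ))) from rfl,
      show Dfin p (m+1) b = (Dfin p m (b/p)).image (gp p ((b % p : ℕ) : ℤ)) ∪
        (Dfin p m (b/p)).image (gp p (-((b % p : ℕ) : ℤ))) from rfl]
  rw [filter_shift, Finset.image_union, image_gp_succ, image_gp_succ]

lemma XF_succ_eq {p m a b : ℕ} :
    XF p (m+1) a b =
      (((Dfin p m (a/p)).image (gp p ((a % p : ℕ) : ℤ)) ∪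
        (Dfin p m (a/p)).image (gp p (-((a % p : ℕ) : ℤ)))) ∩
       ((Dfin p m (b/p)).image (gp p (((b % p : ℕ) : ℤ))) ∪
        (Dfin p m (b/p)).image (gp p (-((b % p : ℕ) : ℤ))))).card := rfl


lemma XL0 {p m a b : ℕ} (hp : 0 < p) (hα : a % p = 0) (hβ : b % p = 0) :
    XF p (m+1) a b = XF p m (a/p) (b/p) := by
  have hp0 : (p:ℤ) ≠ 0 := by exact_mod_cast hp.ne'
  rw [XF_succ_eq]
  simp only [hα, hβ, Nat.cast_zero, neg_zero, Finset.union_self]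
  rw [image_inter_gp hp0 _ _ (show (0:ℤ) = 0 + (p:ℤ) * 0 by ring),
      Finset.card_image_of_injective _ (gp_inj hp0 _), card_filter_zero]
  rfl

lemma XL1 {p m a b : ℕ} (hp : p.Prime) (hodd : p ≠ 2) (hab : a % p = b % p)
    (h0 : b % p ≠ 0) : XF p (m+1) a b = 2 * XF p m (a/p) (b/p) := by
  have hp0 : (p:ℤ) ≠ 0 := by exact_mod_cast hp.pos.ne'
  have hpodd : p % 2 = 1 := Nat.odd_iff.mp (hp.odd_of_ne_two hodd)
  have hblt : b % p < p := Nat.mod_lt _ hp.pos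
  have hnd : ¬ (p:ℤ) ∣ (((b % p : ℕ):ℤ) - -((b % p : ℕ):ℤ)) :=
    not_dvd_helper (by omega) (by omega) (by omega) (by omega) (by omega)
  have hnd' : ¬ (p:ℤ) ∣ (-((b % p : ℕ):ℤ) - ((b % p : ℕ):ℤ)) :=
    not_dvd_helper (by omega) (by omega) (by omega) (by omega) (by omega)
  rw [XF_succ_eq, hab]
  rw [Finset.union_inter_distrib_right, Finset.inter_union_distrib_left,
      Finset.inter_union_distrib_left]
  rw [image_inter_gp hp0 _ _ (show ((b % p : ℕ):ℤ) = ((b % p : ℕ):ℤ) + (p:ℤ) * 0 by ring),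
      inter_empty_gp _ _ hnd, inter_empty_gp _ _ hnd',
      image_inter_gp hp0 _ _ (show -((b % p : ℕ):ℤ) = -((b % p : ℕ):ℤ) + (p:ℤ) * 0 by ring)]
  rw [Finset.union_empty, Finset.empty_union]
  rw [Finset.card_union_of_disjoint (disj_image_gp _ _ hnd),
      Finset.card_image_of_injective _ (gp_inj hp0 _),
      Finset.card_image_of_injective _ (gp_inj hp0 _),
      card_filter_zero]
  unfold XF
  omega

lemma XL2 {p m a b : ℕ} (hp : p.Prime) (hs : a % p + b % p = p) (hab : a % p ≠ b % p) :
    XF p (m+1) a b = YF p m (b/p) (a/p) + YF p m (a/p) (b/p) := by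
  have hp0 : (p:ℤ) ≠ 0 := by exact_mod_cast hp.pos.ne'
  have halt : a % p < p := Nat.mod_lt _ hp.pos
  have hblt : b % p < p := Nat.mod_lt _ hp.pos
  have hnd1 : ¬ (p:ℤ) ∣ (((a % p : ℕ):ℤ) - ((b % p : ℕ):ℤ)) :=
    not_dvd_helper (by omega) (by omega) (by omega) (by omega) (by omega)
  have hnd4 : ¬ (p:ℤ) ∣ (-((a % p : ℕ):ℤ) - -((b % p : ℕ):ℤ)) :=
    not_dvd_helper (by omega) (by omega) (by omega) (by omega) (by omega)
  have hnd5 : ¬ (p:ℤ) ∣ (((a % p : ℕ):ℤ) - -((a % p : ℕ):ℤ)) :=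
    not_dvd_helper (by omega) (by omega) (by omega) (by omega) (by omega)
  rw [XF_succ_eq]
  rw [Finset.union_inter_distrib_right, Finset.inter_union_distrib_left,
      Finset.inter_union_distrib_left]
  rw [inter_empty_gp _ _ hnd1,
      image_inter_gp hp0 _ _ (show ((a % p : ℕ):ℤ) = -((b % p : ℕ):ℤ) + (p:ℤ) * 1 by push_cast; omega),
      image_inter_gp hp0 _ _ (show -((a % p : ℕ):ℤ) = ((b % p : ℕ):ℤ) + (p:ℤ) * (-1) by push_cast; omega),
      inter_empty_gp _ _ hnd4]
  rw [Finset.empty_union, Finset.union_empty]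
  rw [Finset.card_union_of_disjoint (disj_image_gp _ _ hnd5),
      Finset.card_image_of_injective _ (gp_inj hp0 _),
      Finset.card_image_of_injective _ (gp_inj hp0 _),
      card_filter_one, card_filter_neg_one]

lemma XL3 {p m a b : ℕ} (hp : p.Prime) (hab : a % p ≠ b % p) (hs : a % p + b % p ≠ p) :
    XF p (m+1) a b = 0 := by
  have halt : a % p < p := Nat.mod_lt _ hp.pos
  have hblt : b % p < p := Nat.mod_lt _ hp.pos
  have hnd1 : ¬ (p:ℤ) ∣ (((a % p : ℕ):ℤ) - ((b % p : ℕ):ℤ)) :=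
    not_dvd_helper (by omega) (by omega) (by omega) (by omega) (by omega)
  have hnd2 : ¬ (p:ℤ) ∣ (((a % p : ℕ):ℤ) - -((b % p : ℕ):ℤ)) :=
    not_dvd_helper (by omega) (by omega) (by omega) (by omega) (by omega)
  have hnd3 : ¬ (p:ℤ) ∣ (-((a % p : ℕ):ℤ) - ((b % p : ℕ):ℤ)) :=
    not_dvd_helper (by omega) (by omega) (by omega) (by omega) (by omega)
  have hnd4 : ¬ (p:ℤ) ∣ (-((a % p : ℕ):ℤ) - -((b % p : ℕ):ℤ)) :=
    not_dvd_helper (by omega) (by omega) (by omega) (by omega) (by omega)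
  rw [XF_succ_eq]
  rw [Finset.union_inter_distrib_right, Finset.inter_union_distrib_left,
      Finset.inter_union_distrib_left]
  rw [inter_empty_gp _ _ hnd1, inter_empty_gp _ _ hnd2, inter_empty_gp _ _ hnd3,
      inter_empty_gp _ _ hnd4]
  simp

lemma XL4 {m a b : ℕ} (hα : a % 2 = 1) (hβ : b % 2 = 1) :
    XF 2 (m+1) a b = 2 * XF 2 m (a/2) (b/2) ∨
    XF 2 (m+1) a b = YF 2 m (b/2) (a/2) + YF 2 m (a/2) (b/2) := by
  have hp0 : ((2:ℕ):ℤ) ≠ 0 := by norm_num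
  rw [XF_succ_eq]
  simp only [hα, hβ, Nat.cast_one]
  rw [Finset.union_inter_distrib_right, Finset.inter_union_distrib_left,
      Finset.inter_union_distrib_left]
  rw [image_inter_gp hp0 _ _ (show (1:ℤ) = 1 + ((2:ℕ):ℤ) * 0 by norm_num),
      image_inter_gp hp0 _ _ (show (1:ℤ) = -1 + ((2:ℕ):ℤ) * 1 by norm_num),
      image_inter_gp hp0 _ _ (show (-1:ℤ) = 1 + ((2:ℕ):ℤ) * (-1) by norm_num),
      image_inter_gp hp0 _ _ (show (-1:ℤ) = -1 + ((2:ℕ):ℤ) * 0 by norm_num)]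
  by_cases hpar : (a/2) % 2 = (b/2) % 2
  · left
    have e1 : (Dfin 2 m (a/2)).filter (fun e => e + (1:ℤ) ∈ Dfin 2 m (b/2)) = ∅ := by
      rw [Finset.filter_eq_empty_iff]
      intro e he h1
      have p1 := Dfin_parity m (a/2) e he
      have p2 := Dfin_parity m (b/2) _ h1
      omega
    have e2 : (Dfin 2 m (a/2)).filter (fun e => e + (-1:ℤ) ∈ Dfin 2 m (b/2)) = ∅ := by
      rw [Finset.filter_eq_empty_iff]
      intro e he h1
      have p1 := Dfin_parity m (a/2) e he
      have p2 := Dfin_parity m (b/2) _ h1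
      omega
    rw [e1, e2, Finset.image_empty, Finset.image_empty, Finset.union_empty, Finset.empty_union]
    have hdisj : Disjoint
        (((Dfin 2 m (a/2)).filter (fun e => e + (0:ℤ) ∈ Dfin 2 m (b/2))).image (gp 2 1))
        (((Dfin 2 m (a/2)).filter (fun e => e + (0:ℤ) ∈ Dfin 2 m (b/2))).image (gp 2 (-1))) := by
      rw [Finset.disjoint_left]
      rintro x hx hx'
      simp only [Finset.mem_image, Finset.mem_filter, gp] at hx hx'
      obtain ⟨e, ⟨he, -⟩, rfl⟩ := hx
      obtain ⟨f, ⟨hf, -⟩, hef⟩ := hx'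
      have p1 := Dfin_parity m (a/2) e he
      have p2 := Dfin_parity m (a/2) f hf
      push_cast at hef
      omega
    rw [Finset.card_union_of_disjoint hdisj,
        Finset.card_image_of_injective _ (gp_inj hp0 _),
        Finset.card_image_of_injective _ (gp_inj hp0 _),
        card_filter_zero]
    show _ = 2 * ((Dfin 2 m (a/2)) ∩ (Dfin 2 m (b/2))).card
    omega
  · right
    have e0 : (Dfin 2 m (a/2)).filter (fun e => e + (0:ℤ) ∈ Dfin 2 m (b/2)) = ∅ := by
      rw [Finset.filter_eq_empty_iff]
      intro e he h1
      have p1 := Dfin_parity m (a/2) e he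
      have p2 := Dfin_parity m (b/2) _ h1
      omega
    rw [e0, Finset.image_empty, Finset.image_empty, Finset.empty_union, Finset.union_empty]
    have hdisj : Disjoint
        (((Dfin 2 m (a/2)).filter (fun e => e + (1:ℤ) ∈ Dfin 2 m (b/2))).image (gp 2 1))
        (((Dfin 2 m (a/2)).filter (fun e => e + (-1:ℤ) ∈ Dfin 2 m (b/2))).image (gp 2 (-1))) := by
      rw [Finset.disjoint_left]
      rintro x hx hx'
      simp only [Finset.mem_image, Finset.mem_filter, gp] at hx hx'
      obtain ⟨e, ⟨he, -⟩, rfl⟩ := hx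
      obtain ⟨f, ⟨hf, -⟩, hef⟩ := hx'
      have p1 := Dfin_parity m (a/2) e he
      have p2 := Dfin_parity m (a/2) f hf
      push_cast at hef
      omega
    rw [Finset.card_union_of_disjoint hdisj,
        Finset.card_image_of_injective _ (gp_inj hp0 _),
        Finset.card_image_of_injective _ (gp_inj hp0 _),
        card_filter_one, card_filter_neg_one]

-- Y case lemmas
lemma YL1 {p m a b : ℕ} (hp : p.Prime) (hodd : p ≠ 2)
    (h : a % p = b % p + 1 ∨ b % p = a % p + 1) :
    YF p (m+1) a b = XF p m (a/p) (b/p) := by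
  have hp0 : (p:ℤ) ≠ 0 := by exact_mod_cast hp.pos.ne'
  have hpodd : p % 2 = 1 := Nat.odd_iff.mp (hp.odd_of_ne_two hodd)
  have halt : a % p < p := Nat.mod_lt _ hp.pos
  have hblt : b % p < p := Nat.mod_lt _ hp.pos
  rw [YF_succ_eq]
  rcases h with h1 | h1
  · by_cases h0 : b % p = 0
    · have ha1 : a % p = 1 := by omega
      simp only [h0, ha1, Nat.cast_zero, Nat.cast_one, neg_zero, zero_add, Finset.union_self]
      rw [Finset.union_inter_distrib_right]
      rw [image_inter_gp hp0 _ _ (show (1:ℤ) = 1 + (p:ℤ) * 0 by ring),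
          inter_empty_gp _ _ (show ¬ (p:ℤ) ∣ ((-1:ℤ) - 1) from
            not_dvd_helper (by omega) (by omega) (by omega) (by omega) (by omega))]
      simp only [Finset.union_empty, Finset.empty_union]
      rw [Finset.card_image_of_injective _ (gp_inj hp0 _), card_filter_zero]
      rfl
    · rw [Finset.union_inter_distrib_right, Finset.inter_union_distrib_left,
          Finset.inter_union_distrib_left]
      rw [image_inter_gp hp0 _ _
            (show ((a % p : ℕ):ℤ) = (((b % p : ℕ):ℤ) + 1) + (p:ℤ) * 0 by push_cast; omega),
          inter_empty_gp _ _ (not_dvd_helper (by omega) (by omega) (by omega) (by omega) (by omega)),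
          inter_empty_gp _ _ (not_dvd_helper (by omega) (by omega) (by omega) (by omega) (by omega)),
          inter_empty_gp _ _ (not_dvd_helper (by omega) (by omega) (by omega) (by omega) (by omega))]
      simp only [Finset.union_empty, Finset.empty_union]
      rw [Finset.card_image_of_injective _ (gp_inj hp0 _), card_filter_zero]
      rfl
  · by_cases h0 : a % p = 0
    · have hb1 : b % p = 1 := by omega
      simp only [h0, hb1, Nat.cast_zero, Nat.cast_one, neg_zero, Finset.union_self]
      rw [Finset.inter_union_distrib_left]
      rw [inter_empty_gp _ _ (show ¬ (p:ℤ) ∣ ((0:ℤ) - (1+1)) from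
            not_dvd_helper (by omega) (by omega) (by omega) (by omega) (by omega)),
          image_inter_gp hp0 _ _ (show (0:ℤ) = (-1 + 1) + (p:ℤ) * 0 by ring)]
      simp only [Finset.union_empty, Finset.empty_union]
      rw [Finset.card_image_of_injective _ (gp_inj hp0 _), card_filter_zero]
      rfl
    · rw [Finset.union_inter_distrib_right, Finset.inter_union_distrib_left,
          Finset.inter_union_distrib_left]
      rw [inter_empty_gp _ _ (not_dvd_helper (by omega) (by omega) (by omega) (by omega) (by omega)),
          inter_empty_gp _ _ (not_dvd_helper (by omega) (by omega) (by omega) (by omega) (by omega)),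
          inter_empty_gp _ _ (not_dvd_helper (by omega) (by omega) (by omega) (by omega) (by omega)),
          image_inter_gp hp0 _ _
            (show -((a % p : ℕ):ℤ) = (-((b % p : ℕ):ℤ) + 1) + (p:ℤ) * 0 by push_cast; omega)]
      simp only [Finset.union_empty, Finset.empty_union]
      rw [Finset.card_image_of_injective _ (gp_inj hp0 _), card_filter_zero]
      rfl

lemma YL2 {p m a b : ℕ} (hp : p.Prime) (hs : a % p + b % p = p + 1)
    (h1 : a % p ≠ b % p + 1) (h2 : b % p ≠ a % p + 1) :
    YF p (m+1) a b = YF p m (b/p) (a/p) := by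
  have hp0 : (p:ℤ) ≠ 0 := by exact_mod_cast hp.pos.ne'
  have hp2 : 2 ≤ p := hp.two_le
  have halt : a % p < p := Nat.mod_lt _ hp.pos
  have hblt : b % p < p := Nat.mod_lt _ hp.pos
  rw [YF_succ_eq]
  rw [Finset.union_inter_distrib_right, Finset.inter_union_distrib_left,
      Finset.inter_union_distrib_left]
  rw [inter_empty_gp _ _ (not_dvd_helper (by omega) (by omega) (by omega) (by omega) (by omega)),
      image_inter_gp hp0 _ _
        (show ((a % p : ℕ):ℤ) = (-((b % p : ℕ):ℤ) + 1) + (p:ℤ) * 1 by push_cast; omega),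
      inter_empty_gp _ _ (not_dvd_helper (by omega) (by omega) (by omega) (by omega) (by omega)),
      inter_empty_gp _ _ (not_dvd_helper (by omega) (by omega) (by omega) (by omega) (by omega))]
  simp only [Finset.union_empty, Finset.empty_union]
  rw [Finset.card_image_of_injective _ (gp_inj hp0 _), card_filter_one]

lemma YL3 {p m a b : ℕ} (hp : p.Prime) (hs : a % p + b % p + 1 = p)
    (h1 : a % p ≠ b % p + 1) (h2 : b % p ≠ a % p + 1) :
    YF p (m+1) a b = YF p m (a/p) (b/p) := by
  have hp0 : (p:ℤ) ≠ 0 := by exact_mod_cast hp.pos.ne'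
  have hp2 : 2 ≤ p := hp.two_le
  have halt : a % p < p := Nat.mod_lt _ hp.pos
  have hblt : b % p < p := Nat.mod_lt _ hp.pos
  rw [YF_succ_eq]
  by_cases h0 : a % p = 0
  · simp only [h0, Nat.cast_zero, neg_zero, Finset.union_self]
    rw [Finset.inter_union_distrib_left]
    rw [image_inter_gp hp0 _ _
          (show (0:ℤ) = (((b % p : ℕ):ℤ) + 1) + (p:ℤ) * (-1) by push_cast; omega),
        inter_empty_gp _ _ (not_dvd_helper (by omega) (by omega) (by omega) (by omega) (by omega))]
    simp only [Finset.union_empty, Finset.empty_union]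
    rw [Finset.card_image_of_injective _ (gp_inj hp0 _), card_filter_neg_one]
  · by_cases hb0 : b % p = 0
    · simp only [hb0, Nat.cast_zero, neg_zero, zero_add, Finset.union_self]
      rw [Finset.union_inter_distrib_right]
      rw [inter_empty_gp _ _ (not_dvd_helper (by omega) (by omega) (by omega) (by omega) (by omega)),
          image_inter_gp hp0 _ _
            (show -((a % p : ℕ):ℤ) = (1:ℤ) + (p:ℤ) * (-1) by push_cast; omega)]
      simp only [Finset.union_empty, Finset.empty_union]
      rw [Finset.card_image_of_injective _ (gp_inj hp0 _), card_filter_neg_one]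
    · rw [Finset.union_inter_distrib_right, Finset.inter_union_distrib_left,
          Finset.inter_union_distrib_left]
      rw [inter_empty_gp _ _ (not_dvd_helper (by omega) (by omega) (by omega) (by omega) (by omega)),
          inter_empty_gp _ _ (not_dvd_helper (by omega) (by omega) (by omega) (by omega) (by omega)),
          image_inter_gp hp0 _ _
            (show -((a % p : ℕ):ℤ) = (((b % p : ℕ):ℤ) + 1) + (p:ℤ) * (-1) by push_cast; omega),
          inter_empty_gp _ _ (not_dvd_helper (by omega) (by omega) (by omega) (by omega) (by omega))]
      simp only [Finset.union_empty, Finset.empty_union]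
      rw [Finset.card_image_of_injective _ (gp_inj hp0 _), card_filter_neg_one]

lemma YL4 {p m a b : ℕ} (hp : p.Prime)
    (h1 : a % p ≠ b % p + 1) (h2 : b % p ≠ a % p + 1)
    (h3 : a % p + b % p + 1 ≠ p) (h4 : a % p + b % p ≠ p + 1) :
    YF p (m+1) a b = 0 := by
  have hp2 : 2 ≤ p := hp.two_le
  have halt : a % p < p := Nat.mod_lt _ hp.pos
  have hblt : b % p < p := Nat.mod_lt _ hp.pos
  rw [YF_succ_eq]
  rw [Finset.union_inter_distrib_right, Finset.inter_union_distrib_left,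
      Finset.inter_union_distrib_left]
  rw [inter_empty_gp _ _ (not_dvd_helper (by omega) (by omega) (by omega) (by omega) (by omega)),
      inter_empty_gp _ _ (not_dvd_helper (by omega) (by omega) (by omega) (by omega) (by omega)),
      inter_empty_gp _ _ (not_dvd_helper (by omega) (by omega) (by omega) (by omega) (by omega)),
      inter_empty_gp _ _ (not_dvd_helper (by omega) (by omega) (by omega) (by omega) (by omega))]
  simp

lemma Y2a {m a b : ℕ} (hα : a % 2 = 1) (hβ : b % 2 = 0)
    (hpar : (a/2) % 2 = (b/2) % 2) : YF 2 (m+1) a b = XF 2 m (a/2) (b/2) := by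
  have hp0 : ((2:ℕ):ℤ) ≠ 0 := by norm_num
  rw [YF_succ_eq]
  simp only [hα, hβ, Nat.cast_one, Nat.cast_zero, neg_zero, zero_add, Finset.union_self]
  rw [Finset.union_inter_distrib_right]
  rw [image_inter_gp hp0 _ _ (show (1:ℤ) = 1 + ((2:ℕ):ℤ) * 0 by norm_num),
      image_inter_gp hp0 _ _ (show (-1:ℤ) = 1 + ((2:ℕ):ℤ) * (-1) by norm_num)]
  have e2 : (Dfin 2 m (a/2)).filter (fun e => e + (-1:ℤ) ∈ Dfin 2 m (b/2)) = ∅ := by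
    rw [Finset.filter_eq_empty_iff]
    intro e he h1
    have p1 := Dfin_parity m (a/2) e he
    have p2 := Dfin_parity m (b/2) _ h1
    omega
  rw [e2, Finset.image_empty]
  simp only [Finset.union_empty, Finset.empty_union]
  rw [Finset.card_image_of_injective _ (gp_inj hp0 _), card_filter_zero]
  rfl

lemma Y2b {m a b : ℕ} (hα : a % 2 = 1) (hβ : b % 2 = 0)
    (hpar : (a/2) % 2 ≠ (b/2) % 2) : YF 2 (m+1) a b = YF 2 m (a/2) (b/2) := by
  have hp0 : ((2:ℕ):ℤ) ≠ 0 := by norm_num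
  rw [YF_succ_eq]
  simp only [hα, hβ, Nat.cast_one, Nat.cast_zero, neg_zero, zero_add, Finset.union_self]
  rw [Finset.union_inter_distrib_right]
  rw [image_inter_gp hp0 _ _ (show (1:ℤ) = 1 + ((2:ℕ):ℤ) * 0 by norm_num),
      image_inter_gp hp0 _ _ (show (-1:ℤ) = 1 + ((2:ℕ):ℤ) * (-1) by norm_num)]
  have e0 : (Dfin 2 m (a/2)).filter (fun e => e + (0:ℤ) ∈ Dfin 2 m (b/2)) = ∅ := by
    rw [Finset.filter_eq_empty_iff]
    intro e he h1
    have p1 := Dfin_parity m (a/2) e he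
    have p2 := Dfin_parity m (b/2) _ h1
    omega
  rw [e0, Finset.image_empty]
  simp only [Finset.union_empty, Finset.empty_union]
  rw [Finset.card_image_of_injective _ (gp_inj hp0 _), card_filter_neg_one]

lemma Y2c {m a b : ℕ} (hα : a % 2 = 0) (hβ : b % 2 = 1)
    (hpar : (a/2) % 2 = (b/2) % 2) : YF 2 (m+1) a b = XF 2 m (a/2) (b/2) := by
  have hp0 : ((2:ℕ):ℤ) ≠ 0 := by norm_num
  rw [YF_succ_eq]
  simp only [hα, hβ, Nat.cast_one, Nat.cast_zero, neg_zero, Finset.union_self]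
  rw [Finset.inter_union_distrib_left]
  rw [image_inter_gp hp0 _ _ (show (0:ℤ) = ((1:ℤ)+1) + ((2:ℕ):ℤ) * (-1) by norm_num),
      image_inter_gp hp0 _ _ (show (0:ℤ) = ((-1:ℤ)+1) + ((2:ℕ):ℤ) * 0 by norm_num)]
  have e2 : (Dfin 2 m (a/2)).filter (fun e => e + (-1:ℤ) ∈ Dfin 2 m (b/2)) = ∅ := by
    rw [Finset.filter_eq_empty_iff]
    intro e he h1
    have p1 := Dfin_parity m (a/2) e he
    have p2 := Dfin_parity m (b/2) _ h1
    omega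
  rw [e2, Finset.image_empty]
  simp only [Finset.union_empty, Finset.empty_union]
  rw [Finset.card_image_of_injective _ (gp_inj hp0 _), card_filter_zero]
  rfl

lemma Y2d {m a b : ℕ} (hα : a % 2 = 0) (hβ : b % 2 = 1)
    (hpar : (a/2) % 2 ≠ (b/2) % 2) : YF 2 (m+1) a b = YF 2 m (a/2) (b/2) := by
  have hp0 : ((2:ℕ):ℤ) ≠ 0 := by norm_num
  rw [YF_succ_eq]
  simp only [hα, hβ, Nat.cast_one, Nat.cast_zero, neg_zero, Finset.union_self]
  rw [Finset.inter_union_distrib_left]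
  rw [image_inter_gp hp0 _ _ (show (0:ℤ) = ((1:ℤ)+1) + ((2:ℕ):ℤ) * (-1) by norm_num),
      image_inter_gp hp0 _ _ (show (0:ℤ) = ((-1:ℤ)+1) + ((2:ℕ):ℤ) * 0 by norm_num)]
  have e0 : (Dfin 2 m (a/2)).filter (fun e => e + (0:ℤ) ∈ Dfin 2 m (b/2)) = ∅ := by
    rw [Finset.filter_eq_empty_iff]
    intro e he h1
    have p1 := Dfin_parity m (a/2) e he
    have p2 := Dfin_parity m (b/2) _ h1
    omega
  rw [e0, Finset.image_empty]
  simp only [Finset.union_empty, Finset.empty_union]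
  rw [Finset.card_image_of_injective _ (gp_inj hp0 _), card_filter_neg_one]

lemma pow_lift {m x : ℕ} (h : x = 0 ∨ ∃ k ≤ m, x = 2^k) :
    x = 0 ∨ ∃ k ≤ m+1, x = 2^k := by
  rcases h with h | ⟨k, hk, h⟩
  · exact Or.inl h
  · exact Or.inr ⟨k, by omega, h⟩

lemma pow_double {m x : ℕ} (h : x = 0 ∨ ∃ k ≤ m, x = 2^k) :
    2 * x = 0 ∨ ∃ k ≤ m+1, 2 * x = 2^k := by
  rcases h with h | ⟨k, hk, h⟩
  · exact Or.inl (by omega)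
  · exact Or.inr ⟨k+1, by omega, by rw [h, pow_succ]; ring⟩

lemma YF0 {p a b : ℕ} : YF p 0 a b = if (a:ℤ) - 1 = (b:ℤ) then 1 else 0 := by
  show (Finset.filter (fun x => x - 1 ∈ ({(b:ℤ)} : Finset ℤ)) {(a:ℤ)}).card = _
  rw [Finset.filter_singleton]
  simp only [Finset.mem_singleton]
  split_ifs <;> simp

lemma XF0 {p a b : ℕ} : XF p 0 a b = if (a:ℤ) = (b:ℤ) then 1 else 0 := by
  show (({(a:ℤ)} : Finset ℤ) ∩ {(b:ℤ)}).card = _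
  split_ifs with h
  · rw [h]; simp
  · rw [Finset.singleton_inter_of_notMem (by simpa using h)]; rfl

lemma key {p : ℕ} (hp : p.Prime) : ∀ m a b : ℕ,
    (XF p m a b = 0 ∨ ∃ k ≤ m, XF p m a b = 2^k) ∧
    (YF p m a b + YF p m b a = 0 ∨ ∃ k ≤ m, YF p m a b + YF p m b a = 2^k) := by
  intro m
  induction m with
  | zero =>
    intro a b
    constructor
    · rw [XF0]
      split_ifs
      · exact Or.inr ⟨0, le_refl 0, rfl⟩
      · exact Or.inl rfl
    · rw [YF0, YF0]
      split_ifs with hy1 hy2 hy2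
      · omega
      · exact Or.inr ⟨0, le_refl 0, rfl⟩
      · exact Or.inr ⟨0, le_refl 0, rfl⟩
      · exact Or.inl rfl
  | succ m ih =>
    intro a b
    have hp2 : 2 ≤ p := hp.two_le
    have halt : a % p < p := Nat.mod_lt _ hp.pos
    have hblt : b % p < p := Nat.mod_lt _ hp.pos
    constructor
    · -- X part
      by_cases h2 : p = 2
      · subst h2
        rcases (show a % 2 = 0 ∨ a % 2 = 1 by omega) with hA | hA <;>
          rcases (show b % 2 = 0 ∨ b % 2 = 1 by omega) with hB | hB
        · rw [XL0 (by norm_num) hA hB]; exact pow_lift (ih (a/2) (b/2)).1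
        · rw [XL3 hp (by omega) (by omega)]; exact Or.inl rfl
        · rw [XL3 hp (by omega) (by omega)]; exact Or.inl rfl
        · rcases XL4 hA hB with h | h
          · rw [h]; exact pow_double (ih (a/2) (b/2)).1
          · rw [h, Nat.add_comm]; exact pow_lift (ih (a/2) (b/2)).2
      · by_cases hab : a % p = b % p
        · by_cases h0 : b % p = 0
          · rw [XL0 hp.pos (by omega) h0]; exact pow_lift (ih (a/p) (b/p)).1
          · rw [XL1 hp h2 hab h0]; exact pow_double (ih (a/p) (b/p)).1
        · by_cases hs : a % p + b % p = p
          · rw [XL2 hp hs hab, Nat.add_comm]; exact pow_lift (ih (a/p) (b/p)).2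
          · rw [XL3 hp hab hs]; exact Or.inl rfl
    · -- Z part
      by_cases h2 : p = 2
      · subst h2
        rcases (show a % 2 = 0 ∨ a % 2 = 1 by omega) with hA | hA <;>
          rcases (show b % 2 = 0 ∨ b % 2 = 1 by omega) with hB | hB
        · rw [YL4 hp (by omega) (by omega) (by omega) (by omega),
              YL4 hp (by omega) (by omega) (by omega) (by omega)]
          exact Or.inl rfl
        · by_cases hpar : (a/2) % 2 = (b/2) % 2
          · rw [Y2c hA hB hpar, Y2a hB hA hpar.symm,
                show XF 2 m (b/2) (a/2) = XF 2 m (a/2) (b/2) from XF_comm, ← two_mul]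
            exact pow_double (ih (a/2) (b/2)).1
          · rw [Y2d hA hB hpar, Y2b hB hA (Ne.symm hpar)]
            exact pow_lift (ih (a/2) (b/2)).2
        · by_cases hpar : (a/2) % 2 = (b/2) % 2
          · rw [Y2a hA hB hpar, Y2c hB hA hpar.symm,
                show XF 2 m (b/2) (a/2) = XF 2 m (a/2) (b/2) from XF_comm, ← two_mul]
            exact pow_double (ih (a/2) (b/2)).1
          · rw [Y2b hA hB hpar, Y2d hB hA (Ne.symm hpar)]
            exact pow_lift (ih (a/2) (b/2)).2
        · rw [YL4 hp (by omega) (by omega) (by omega) (by omega),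
              YL4 hp (by omega) (by omega) (by omega) (by omega)]
          exact Or.inl rfl
      · by_cases hd : a % p = b % p + 1 ∨ b % p = a % p + 1
        · rw [YL1 hp h2 hd, YL1 hp h2 hd.symm,
              show XF p m (b/p) (a/p) = XF p m (a/p) (b/p) from XF_comm, ← two_mul]
          exact pow_double (ih (a/p) (b/p)).1
        · by_cases hs1 : a % p + b % p = p + 1
          · rw [YL2 hp hs1 (by omega) (by omega), YL2 hp (by omega) (by omega) (by omega),
                Nat.add_comm]
            exact pow_lift (ih (a/p) (b/p)).2
          · by_cases hs2 : a % p + b % p + 1 = p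
            · rw [YL3 hp hs2 (by omega) (by omega), YL3 hp (by omega) (by omega) (by omega)]
              exact pow_lift (ih (a/p) (b/p)).2
            · rw [YL4 hp (by omega) (by omega) (by omega) (by omega),
                  YL4 hp (by omega) (by omega) (by omega) (by omega)]
              exact Or.inl rfl


/-- For `p^{n-1} ≤ a, b < p^n`, the number of common descendants of `a` and `b` is either `0`
or a power `2^m` with `0 ≤ m ≤ n - 1`. -/
theorem Xcard_eq_zero_or_pow_two {p : ℕ} (hp : p.Prime) {n a b : ℕ} (hn : 1 ≤ n)
    (ha₁ : p ^ (n - 1) ≤ a) (ha₂ : a < p ^ n)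
    (hb₁ : p ^ (n - 1) ≤ b) (hb₂ : b < p ^ n) :
    Xcard p (n - 1) a b = 0 ∨ ∃ m ≤ n - 1, Xcard p (n - 1) a b = 2 ^ m := by
  rw [Xcard_eq_XF]
  exact (key hp (n-1) a b).1
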